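/- For every s ≥ 1, the hat guessing game on the path P_s (on s vertices v₁,...,v_s) is winning where each vertex vᵢ with i < s has hatness 4s−2, vertex v_s has hatness 2s−1, and every vertex makes s guesses. -/

import Mathlib

set_option maxHeartbeats 1600000


/-- A winning strategy in the hat guessing game `⟨G, h, g⟩`: each sage `v` deterministically
outputs at most `g v` guesses depending only on the hat colors of its neighbors, and for
every hat assignment (with `c v < h v`) some sage's guess set contains its own color. -/
def HatWinning {V : Type*} (G : SimpleGraph V) (h g : V → ℕ) : Prop :=
  ∃ σ : V → (V → ℕ) → Finset ℕ,
    (∀ v c c', (∀ u, G.Adj v u → c u = c' u) → σ v c = σ v c') ∧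
    (∀ v c, (σ v c).card ≤ g v) ∧
    ∀ c : V → ℕ, (∀ v, c v < h v) → ∃ v, c v ∈ σ v c

/-- The hat guessing game played by the sages occupying the vertices of `S` only
(the game on the induced subgraph `G[S]`). -/
def HatWinningOn {V : Type*} (G : SimpleGraph V) (S : Set V) (h g : V → ℕ) : Prop :=
  ∃ σ : V → (V → ℕ) → Finset ℕ,
    (∀ v ∈ S, ∀ c c', (∀ u ∈ S, G.Adj v u → c u = c' u) → σ v c = σ v c') ∧
    (∀ v ∈ S, ∀ c, (σ v c).card ≤ g v) ∧
    ∀ c : V → ℕ, (∀ v ∈ S, c v < h v) → ∃ v ∈ S, c v ∈ σ v c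



section PathHatAux

open Finset

namespace HatPathAux

/-- `E k = [0,k) ∪ (N+[0,k))` -/
def Ek (N k : ℕ) : Finset ℕ := Finset.range k ∪ (Finset.range k).image (· + N)

/-- `O k = [0,k) ∪ (N+s+[0,k-1))` -/
def Ok (N s k : ℕ) : Finset ℕ :=
  Finset.range k ∪ (Finset.range (k - 1)).image (· + (N + s))

lemma mem_Ek {N k x : ℕ} : x ∈ Ek N k ↔ x < k ∨ (N ≤ x ∧ x < N + k) := by
  simp only [Ek, mem_union, mem_range, mem_image]
  constructor
  · rintro (h | ⟨y, hy, rfl⟩)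
    · exact Or.inl h
    · exact Or.inr ⟨by omega, by omega⟩
  · rintro (h | ⟨h1, h2⟩)
    · exact Or.inl h
    · exact Or.inr ⟨x - N, by omega, by omega⟩

lemma mem_Ok {N s k x : ℕ} : x ∈ Ok N s k ↔ x < k ∨ (N + s ≤ x ∧ x < N + s + (k - 1)) := by
  simp only [Ok, mem_union, mem_range, mem_image]
  constructor
  · rintro (h | ⟨y, hy, rfl⟩)
    · exact Or.inl h
    · exact Or.inr ⟨by omega, by omega⟩
  · rintro (h | ⟨h1, h2⟩)
    · exact Or.inl h
    · exact Or.inr ⟨x - (N + s), by omega, by omega⟩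

lemma card_Ek {N k : ℕ} (h : k ≤ N) : (Ek N k).card = 2 * k := by
  rw [Ek, card_union_of_disjoint, card_range,
    Finset.card_image_of_injective _ (add_left_injective N), card_range]
  · omega
  · simp only [Finset.disjoint_left, mem_range, mem_image]
    rintro a ha ⟨y, hy, rfl⟩
    omega

lemma card_Ok {N s k : ℕ} (h : k ≤ N + s) : (Ok N s k).card = k + (k - 1) := by
  rw [Ok, card_union_of_disjoint, card_range,
    Finset.card_image_of_injective _ (add_left_injective (N + s)), card_range]
  simp only [Finset.disjoint_left, mem_range, mem_image]
  rintro a ha ⟨y, hy, rfl⟩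
  omega

/-- the knowledge sets of the cascade -/
def A (s i : ℕ) : Finset ℕ :=
  if (s + i) % 2 = 0 then Ek (2 * s - 1) ((s + i) / 2)
  else Ok (2 * s - 1) s ((s + i) / 2 + 1)

lemma A_card {s i : ℕ} (hs : 2 ≤ s) (hi : i ≤ s - 2) : (A s i).card = s + i := by
  unfold A
  split
  · rw [card_Ek (by omega)]; omega
  · rw [card_Ok (by omega)]; omega

lemma A_lt {s i : ℕ} (hs : 2 ≤ s) (hi : i ≤ s - 2) : ∀ a ∈ A s i, a < 4 * s - 2 := by
  intro a ha
  unfold A at ha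
  split at ha
  · rw [mem_Ek] at ha; omega
  · rw [mem_Ok] at ha; omega

lemma mod_helper {M w a : ℕ} (ha : a < M) (hw : w < M) :
    (w + (M - a)) % M = if a ≤ w then w - a else w + (M - a) := by
  split
  · have : w + (M - a) = (w - a) + M := by omega
    rw [this, Nat.add_mod_right, Nat.mod_eq_of_lt (by omega)]
  · exact Nat.mod_eq_of_lt (by omega)

lemma mod_cast_down {M X : ℕ} (h : M ≤ X) : X % M = (X - M) % M := by
  conv_lhs => rw [show X = (X - M) + M by omega]
  rw [Nat.add_mod_right]

lemma one_Ico_card_le {T : Finset ℕ} {l1 h1 : ℕ}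
    (hsub : ∀ a, l1 ≤ a ∧ a < h1 → a ∈ T) :
    h1 - l1 ≤ T.card := by
  have hsub' : Finset.Ico l1 h1 ⊆ T := by
    intro a ha
    simp only [mem_Ico] at ha
    exact hsub a ha
  calc h1 - l1 = (Finset.Ico l1 h1).card := (Nat.card_Ico _ _).symm
  _ ≤ T.card := Finset.card_le_card hsub'

lemma two_Ico_card_le {T : Finset ℕ} {l1 h1 l2 h2 : ℕ} (hd : h1 ≤ l2)
    (hsub : ∀ a, (l1 ≤ a ∧ a < h1) ∨ (l2 ≤ a ∧ a < h2) → a ∈ T) :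
    (h1 - l1) + (h2 - l2) ≤ T.card := by
  have hsub' : Finset.Ico l1 h1 ∪ Finset.Ico l2 h2 ⊆ T := by
    intro a ha
    simp only [mem_union, mem_Ico] at ha
    exact hsub a ha
  have hd' : Disjoint (Finset.Ico l1 h1) (Finset.Ico l2 h2) := by
    simp only [Finset.disjoint_left, mem_Ico]
    omega
  calc (h1 - l1) + (h2 - l2) = (Finset.Ico l1 h1 ∪ Finset.Ico l2 h2).card := by
        rw [card_union_of_disjoint hd', Nat.card_Ico, Nat.card_Ico]
  _ ≤ T.card := Finset.card_le_card hsub'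

/-- shifting the window by `N` preserves the count, by the `+N` involution of `Ek`. -/
lemma count_shift {s k : ℕ} (hk : k ≤ 2 * s - 1) (hs : 1 ≤ s) (Q : ℕ → Prop) [DecidablePred Q]
    {w : ℕ} (hw : 2 * s - 1 ≤ w) :
    ((Ek (2 * s - 1) k).filter (fun a => Q ((w + ((4 * s - 2) - a)) % (4 * s - 2)))).card
    = ((Ek (2 * s - 1) k).filter
        (fun a => Q (((w - (2 * s - 1)) + ((4 * s - 2) - a)) % (4 * s - 2)))).card := by
  set N := 2 * s - 1 with hN
  set M := 4 * s - 2 with hM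
  apply Finset.card_bij (fun a _ => if a < N then a + N else a - N)
  · -- maps into RHS
    intro a ha
    simp only [mem_filter, mem_Ek] at ha ⊢
    obtain ⟨hmem, hQ⟩ := ha
    have haM : a < M := by omega
    constructor
    · split <;> omega
    · have harg : ((w - N) + (M - (if a < N then a + N else a - N))) % M
          = (w + (M - a)) % M := by
        split
        · -- a < N : new argument is old minus M
          have h1 : (w - N) + (M - (a + N)) = (w + (M - a)) - M := by omega
          rw [h1, ← mod_cast_down (by omega)]
        · congr 1
          omega
      rwa [harg]
  · -- injective
    intro a ha b hb hab
    simp only [mem_filter, mem_Ek] at ha hb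
    split at hab <;> split at hab <;> omega
  · -- surjective
    intro b hb
    simp only [mem_filter, mem_Ek] at hb
    obtain ⟨hmem, hQ⟩ := hb
    refine ⟨if b < N then b + N else b - N, ?_, ?_⟩
    · simp only [mem_filter, mem_Ek]
      constructor
      · split <;> omega
      · have harg : (w + (M - (if b < N then b + N else b - N))) % M
            = ((w - N) + (M - b)) % M := by
          split
          · congr 1
            omega
          · have h1 : (w - N) + (M - b) = (w + (M - (b - N))) - M := by omega
            rw [show (w + (M - (b - N))) % M = ((w + (M - (b - N))) - M) % M
              from mod_cast_down (by omega), h1]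
        rwa [harg]
    · split <;> split <;> omega

/-- membership in `Ek` is invariant under adding `N` mod `M`. -/
lemma Ek_shift_mem {s k x : ℕ} (hk : k ≤ 2 * s - 1) (hs : 1 ≤ s) (hx : x < 4 * s - 2) :
    (x + (2 * s - 1)) % (4 * s - 2) ∈ Ek (2 * s - 1) k ↔ x ∈ Ek (2 * s - 1) k := by
  set N := 2 * s - 1 with hN
  set M := 4 * s - 2 with hM
  rcases lt_or_ge x N with h | h
  · rw [Nat.mod_eq_of_lt (by omega), mem_Ek, mem_Ek]
    omega
  · have h1 : x + N = (x - N) + M := by omega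
    rw [h1, Nat.add_mod_right, Nat.mod_eq_of_lt (by omega), mem_Ek, mem_Ek]
    omega

/-- Core counting, even case, first half. -/
lemma core_even_half {s i w k : ℕ} (hs : 2 ≤ s) (hi1 : 1 ≤ i) (hi2 : i ≤ s - 2)
    (hk : 2 * k = s + i) (hw : w < 2 * s - 1) :
    i ≤ ((Ek (2 * s - 1) k).filter
      (fun a => (w + ((4 * s - 2) - a)) % (4 * s - 2) ∈ Ok (2 * s - 1) s k)).card := by
  set N := 2 * s - 1 with hN
  set M := 4 * s - 2 with hM
  have hwM : w < M := by omega
  rcases (by omega : (w + 2 ≤ i) ∨ (i ≤ w + 1 ∧ w ≤ s - 1) ∨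
      (s ≤ w ∧ w + 2 ≤ s + k) ∨ (s + k ≤ w + 1 ∧ w < N)) with h | h | h | h
  · -- region E1 : pieces [0, w+1) and [w+s+1-k, k)
    have hb := two_Ico_card_le (T := (Ek N k).filter
        (fun a => (w + (M - a)) % M ∈ Ok N s k))
        (l1 := 0) (h1 := w + 1) (l2 := w + s + 1 - k) (h2 := k) (by omega) ?_
    · omega
    · intro a ha
      have haM : a < M := by omega
      rw [mem_filter, mem_Ek, mod_helper haM hwM]
      refine ⟨by omega, ?_⟩
      split <;> (rw [mem_Ok]; omega)
  · -- region E2 : single piece of length i starting at w - (k-1) (truncated)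
    have hb := one_Ico_card_le (T := (Ek N k).filter
        (fun a => (w + (M - a)) % M ∈ Ok N s k))
        (l1 := w - (k - 1)) (h1 := (w - (k - 1)) + i) ?_
    · omega
    · intro a ha
      have haM : a < M := by omega
      rw [mem_filter, mem_Ek, mod_helper haM hwM]
      refine ⟨by omega, ?_⟩
      split <;> (rw [mem_Ok]; omega)
  · -- region E3a : pieces [w+1-k, k) and [N, w+s)
    have hb := two_Ico_card_le (T := (Ek N k).filter
        (fun a => (w + (M - a)) % M ∈ Ok N s k))
        (l1 := w + 1 - k) (h1 := k) (l2 := N) (h2 := w + s) (by omega) ?_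
    · omega
    · intro a ha
      have haM : a < M := by omega
      rw [mem_filter, mem_Ek, mod_helper haM hwM]
      refine ⟨by omega, ?_⟩
      split <;> (rw [mem_Ok]; omega)
  · -- region E3b : single piece [w+s+1-k, N+k)
    have hb := one_Ico_card_le (T := (Ek N k).filter
        (fun a => (w + (M - a)) % M ∈ Ok N s k))
        (l1 := w + s + 1 - k) (h1 := N + k) ?_
    · omega
    · intro a ha
      have haM : a < M := by omega
      rw [mem_filter, mem_Ek, mod_helper haM hwM]
      refine ⟨by omega, ?_⟩
      split <;> (rw [mem_Ok]; omega)

/-- Core counting, odd case, first half. -/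
lemma core_odd_half {s i w k : ℕ} (hs : 2 ≤ s) (hi1 : 1 ≤ i) (hi2 : i ≤ s - 2)
    (hk : 2 * k = s + i + 1) (hw : w < 2 * s - 1) :
    i ≤ ((Ok (2 * s - 1) s k).filter
      (fun a => (w + ((4 * s - 2) - a)) % (4 * s - 2) ∈ Ek (2 * s - 1) (k - 1))).card := by
  set N := 2 * s - 1 with hN
  set M := 4 * s - 2 with hM
  have hwM : w < M := by omega
  rcases (by omega : (w + 2 ≤ i) ∨ (i ≤ w + 1 ∧ w ≤ s - 1) ∨
      (s ≤ w ∧ w + 3 ≤ s + k) ∨ (s + k ≤ w + 2 ∧ w < N)) with h | h | h | h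
  · -- region O1 : pieces [0, w+1) and [w+M+2-k, N+s+k-1)
    have hb := two_Ico_card_le (T := (Ok N s k).filter
        (fun a => (w + (M - a)) % M ∈ Ek N (k - 1)))
        (l1 := 0) (h1 := w + 1) (l2 := w + M + 2 - k) (h2 := N + s + k - 1) (by omega) ?_
    · omega
    · intro a ha
      have haM : a < M := by omega
      rw [mem_filter, mem_Ok, mod_helper haM hwM]
      refine ⟨by omega, ?_⟩
      split <;> (rw [mem_Ek]; omega)
  · -- region O2 : single piece of length i starting at w - (k-2)
    have hb := one_Ico_card_le (T := (Ok N s k).filter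
        (fun a => (w + (M - a)) % M ∈ Ek N (k - 1)))
        (l1 := w - (k - 2)) (h1 := (w - (k - 2)) + i) ?_
    · omega
    · intro a ha
      have haM : a < M := by omega
      rw [mem_filter, mem_Ok, mod_helper haM hwM]
      refine ⟨by omega, ?_⟩
      split <;> (rw [mem_Ek]; omega)
  · -- region O3a : pieces [w+2-k, k) and [N+s, w+N+1)
    have hb := two_Ico_card_le (T := (Ok N s k).filter
        (fun a => (w + (M - a)) % M ∈ Ek N (k - 1)))
        (l1 := w + 2 - k) (h1 := k) (l2 := N + s) (h2 := w + N + 1) (by omega) ?_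
    · omega
    · intro a ha
      have haM : a < M := by omega
      rw [mem_filter, mem_Ok, mod_helper haM hwM]
      refine ⟨by omega, ?_⟩
      split <;> (rw [mem_Ek]; omega)
  · -- region O3b : single piece [w+N+2-k, N+s+k-1)
    have hb := one_Ico_card_le (T := (Ok N s k).filter
        (fun a => (w + (M - a)) % M ∈ Ek N (k - 1)))
        (l1 := w + N + 2 - k) (h1 := N + s + k - 1) ?_
    · omega
    · intro a ha
      have haM : a < M := by omega
      rw [mem_filter, mem_Ok, mod_helper haM hwM]
      refine ⟨by omega, ?_⟩
      split <;> (rw [mem_Ek]; omega)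

/-- Shift invariance for the odd case (predicate side). -/
lemma core_odd_shifted {s k w : ℕ} (hs : 2 ≤ s) (hk : k ≤ s - 1)
    (hw1 : 2 * s - 1 ≤ w) (hw : w < 4 * s - 2) :
    ((Ok (2 * s - 1) s k).filter
      (fun a => (w + ((4 * s - 2) - a)) % (4 * s - 2) ∈ Ek (2 * s - 1) (k - 1)))
    = ((Ok (2 * s - 1) s k).filter
      (fun a => ((w - (2 * s - 1)) + ((4 * s - 2) - a)) % (4 * s - 2)
        ∈ Ek (2 * s - 1) (k - 1))) := by
  apply Finset.filter_congr
  intro a ha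
  have haM : a < 4 * s - 2 := by
    rw [mem_Ok] at ha; omega
  have harg : (w + ((4 * s - 2) - a)) % (4 * s - 2)
      = ((((w - (2 * s - 1)) + ((4 * s - 2) - a)) % (4 * s - 2)) + (2 * s - 1))
          % (4 * s - 2) := by
    rw [Nat.mod_add_mod]
    congr 1
    omega
  rw [harg, Ek_shift_mem (by omega) (by omega) (Nat.mod_lt _ (by omega))]

/-- The full core counting lemma. -/
lemma core {s i w : ℕ} (hs : 2 ≤ s) (hi1 : 1 ≤ i) (hi2 : i ≤ s - 2) (hw : w < 4 * s - 2) :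
    i ≤ ((A s i).filter
      (fun a => (w + ((4 * s - 2) - a)) % (4 * s - 2) ∈ A s (i - 1))).card := by
  rcases Nat.even_or_odd (s + i) with hpar | hpar
  · obtain ⟨k, hk⟩ := hpar
    have hk2 : 2 * k = s + i := by omega
    have hA1 : A s i = Ek (2 * s - 1) k := by
      rw [A, if_pos (by omega)]
      congr 1
      omega
    have hA0 : A s (i - 1) = Ok (2 * s - 1) s k := by
      rw [A, if_neg (by omega)]
      congr 1
      omega
    rw [hA1, hA0]
    rcases lt_or_ge w (2 * s - 1) with hw1 | hw1
    · exact core_even_half hs hi1 hi2 hk2 hw1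
    · have heq := count_shift (s := s) (k := k) (by omega) (by omega)
        (fun x => x ∈ Ok (2 * s - 1) s k) (w := w) hw1
      rw [heq]
      exact core_even_half hs hi1 hi2 hk2 (by omega)
  · obtain ⟨k', hk⟩ := hpar
    have hk2 : 2 * (k' + 1) = s + i + 1 := by omega
    have hA1 : A s i = Ok (2 * s - 1) s (k' + 1) := by
      rw [A, if_neg (by omega)]
      congr 1
      omega
    have hA0 : A s (i - 1) = Ek (2 * s - 1) (k' + 1 - 1) := by
      rw [A, if_pos (by omega)]
      congr 2
      omega
    rw [hA1, hA0]
    rcases lt_or_ge w (2 * s - 1) with hw1 | hw1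
    · exact core_odd_half hs hi1 hi2 hk2 hw1
    · rw [core_odd_shifted hs (by omega) hw1 hw]
      exact core_odd_half hs hi1 hi2 hk2 (by omega)

/-- Last vertex counting, first half. -/
lemma last_half {s z : ℕ} (hs : 2 ≤ s) (hz : z < 2 * s - 1) :
    s - 1 ≤ ((Ek (2 * s - 1) (s - 1)).filter
      (fun b => (z + ((4 * s - 2) - b)) % (4 * s - 2) < 2 * s - 1)).card := by
  set N := 2 * s - 1 with hN
  set M := 4 * s - 2 with hM
  have hzM : z < M := by omega
  rcases (by omega : z + 2 ≤ s ∨ s - 1 ≤ z) with h | h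
  · have hb := two_Ico_card_le (T := (Ek N (s - 1)).filter
        (fun b => (z + (M - b)) % M < N))
        (l1 := 0) (h1 := z + 1) (l2 := z + N + 1) (h2 := N + s - 1) (by omega) ?_
    · omega
    · intro b hb
      have hbM : b < M := by omega
      rw [mem_filter, mem_Ek, mod_helper hbM hzM]
      refine ⟨by omega, ?_⟩
      split <;> omega
  · have hb := one_Ico_card_le (T := (Ek N (s - 1)).filter
        (fun b => (z + (M - b)) % M < N))
        (l1 := 0) (h1 := s - 1) ?_
    · omega
    · intro b hb
      have hbM : b < M := by omega
      rw [mem_filter, mem_Ek, mod_helper hbM hzM]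
      refine ⟨by omega, ?_⟩
      split <;> omega

/-- Full last vertex counting lemma. -/
lemma lastCount {s z : ℕ} (hs : 2 ≤ s) (hz : z < 4 * s - 2) :
    s - 1 ≤ ((A s (s - 2)).filter
      (fun b => (z + ((4 * s - 2) - b)) % (4 * s - 2) < 2 * s - 1)).card := by
  have hA : A s (s - 2) = Ek (2 * s - 1) (s - 1) := by
    rw [A, if_pos (by omega)]
    congr 1
    omega
  rw [hA]
  rcases lt_or_ge z (2 * s - 1) with hz1 | hz1
  · exact last_half hs hz1
  · have heq := count_shift (s := s) (k := s - 1) (by omega) (by omega)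
      (fun x => x < 2 * s - 1) (w := z) hz1
    rw [heq]
    exact last_half hs (by omega)

lemma mod_eq_mod_of (M X Y k l : ℕ) (h : X + k * M = Y + l * M) : X % M = Y % M := by
  have h1 : (X + k * M) % M = (Y + l * M) % M := by rw [h]
  simpa [Nat.add_mul_mod_self_right] using h1

lemma q_le_one {M q r : ℕ} (h : r + M * q < 2 * M) : q ≤ 1 := by
  by_contra hq
  push_neg at hq
  have h2 : M * 2 ≤ M * q := Nat.mul_le_mul_left M (by omega)
  have h3 : M * 2 = 2 * M := by ring
  generalize M * q = τ at h h2
  omega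

lemma modH1 {M y a : ℕ} (ha : a < M) (hy : y < M) :
    ((y + a) % M + (M - y)) % M = a := by
  obtain ⟨q, hq⟩ : ∃ q, (y + a) % M + M * q = y + a := ⟨_, Nat.mod_add_div _ _⟩
  have hlt : (y + a) % M < M := Nat.mod_lt _ (by omega)
  have hqle : q ≤ 1 := q_le_one (M := M) (r := (y + a) % M) (by omega)
  conv_rhs => rw [← Nat.mod_eq_of_lt ha]
  rcases Nat.le_one_iff_eq_zero_or_eq_one.mp hqle with rfl | rfl <;>
    simp only [Nat.mul_zero, Nat.mul_one] at hq <;>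
    first
    | exact mod_eq_mod_of _ _ _ 0 0 (by omega)
    | exact mod_eq_mod_of _ _ _ 0 1 (by omega)

lemma modH2 {M y x : ℕ} (hx : x < M) (hy : y < M) :
    (y + (x + (M - y)) % M) % M = x := by
  obtain ⟨q, hq⟩ : ∃ q, (x + (M - y)) % M + M * q = x + (M - y) := ⟨_, Nat.mod_add_div _ _⟩
  have hlt : (x + (M - y)) % M < M := Nat.mod_lt _ (by omega)
  have hqle : q ≤ 1 := q_le_one (M := M) (r := (x + (M - y)) % M) (by omega)
  conv_rhs => rw [← Nat.mod_eq_of_lt hx]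
  rcases Nat.le_one_iff_eq_zero_or_eq_one.mp hqle with rfl | rfl <;>
    simp only [Nat.mul_zero, Nat.mul_one] at hq <;>
    first
    | exact mod_eq_mod_of _ _ _ 0 0 (by omega)
    | exact mod_eq_mod_of _ _ _ 0 1 (by omega)

lemma modH4 {M z b : ℕ} (hb : b < M) (hz : z < M) :
    (z + (M - (z + (M - b)) % M)) % M = b := by
  obtain ⟨q, hq⟩ : ∃ q, (z + (M - b)) % M + M * q = z + (M - b) := ⟨_, Nat.mod_add_div _ _⟩
  have hlt : (z + (M - b)) % M < M := Nat.mod_lt _ (by omega)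
  have hqle : q ≤ 1 := q_le_one (M := M) (r := (z + (M - b)) % M) (by omega)
  conv_rhs => rw [← Nat.mod_eq_of_lt hb]
  rcases Nat.le_one_iff_eq_zero_or_eq_one.mp hqle with rfl | rfl <;>
    simp only [Nat.mul_zero, Nat.mul_one] at hq <;>
    first
    | exact mod_eq_mod_of _ _ _ 0 0 (by omega)
    | exact mod_eq_mod_of _ _ _ 0 1 (by omega)

lemma modH5 {M a y z : ℕ} (ha : a < M) (hy : y < M) (hz : z < M) :
    (z + (M - (y + a) % M)) % M = (((z + (M - y)) % M) + (M - a)) % M := by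
  obtain ⟨q1, hq1⟩ : ∃ q, (y + a) % M + M * q = y + a := ⟨_, Nat.mod_add_div _ _⟩
  have hlt1 : (y + a) % M < M := Nat.mod_lt _ (by omega)
  have hq1le : q1 ≤ 1 := q_le_one (M := M) (r := (y + a) % M) (by omega)
  obtain ⟨q2, hq2⟩ : ∃ q, (z + (M - y)) % M + M * q = z + (M - y) := ⟨_, Nat.mod_add_div _ _⟩
  have hlt2 : (z + (M - y)) % M < M := Nat.mod_lt _ (by omega)
  have hq2le : q2 ≤ 1 := q_le_one (M := M) (r := (z + (M - y)) % M) (by omega)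
  rcases Nat.le_one_iff_eq_zero_or_eq_one.mp hq1le with rfl | rfl <;>
    rcases Nat.le_one_iff_eq_zero_or_eq_one.mp hq2le with rfl | rfl <;>
    simp only [Nat.mul_zero, Nat.mul_one] at hq1 hq2 <;>
    first
    | exact mod_eq_mod_of _ _ _ 1 0 (by omega)
    | exact mod_eq_mod_of _ _ _ 1 1 (by omega)
    | exact mod_eq_mod_of _ _ _ 1 2 (by omega)

/-- the cardinality of a shifted-membership filter equals the cardinality of the base set. -/
lemma card_shift_filter {M y : ℕ} (hM : 0 < M) (hy : y < M) (B : Finset ℕ)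
    (hB : ∀ b ∈ B, b < M) :
    ((Finset.range M).filter (fun x => (x + (M - y)) % M ∈ B)).card = B.card := by
  apply Finset.card_bij (fun x _ => (x + (M - y)) % M)
  · intro x hx
    simp only [mem_filter] at hx
    exact hx.2
  · intro x hx x' hx' hxx
    simp only [mem_filter, mem_range] at hx hx'
    calc x = (y + (x + (M - y)) % M) % M := (modH2 hx.1 hy).symm
    _ = (y + (x' + (M - y)) % M) % M := by rw [hxx]
    _ = x' := modH2 hx'.1 hy
  · intro b hb
    refine ⟨(y + b) % M, ?_, ?_⟩
    · simp only [mem_filter, mem_range]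
      refine ⟨Nat.mod_lt _ (by omega), ?_⟩
      rw [modH1 (hB b hb) hy]
      exact hb
    · rw [modH1 (hB b hb) hy]

/-- card bound for middle vertices' strategies. -/
lemma middle_card {s y z i : ℕ} (hs : 2 ≤ s) (hi1 : 1 ≤ i) (hi2 : i ≤ s - 2)
    (hy : y < 4 * s - 2) (hz : z < 4 * s - 2) :
    ((Finset.range (4 * s - 2)).filter
      (fun x => (x + ((4 * s - 2) - y)) % (4 * s - 2) ∈ A s i ∧
        ¬((z + ((4 * s - 2) - x)) % (4 * s - 2) ∈ A s (i - 1)))).card ≤ s := by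
  have hM0 : 0 < 4 * s - 2 := by omega
  rw [show (Finset.range (4 * s - 2)).filter
      (fun x => (x + ((4 * s - 2) - y)) % (4 * s - 2) ∈ A s i ∧
        ¬((z + ((4 * s - 2) - x)) % (4 * s - 2) ∈ A s (i - 1)))
      = ((Finset.range (4 * s - 2)).filter
          (fun x => (x + ((4 * s - 2) - y)) % (4 * s - 2) ∈ A s i)).filter
          (fun x => ¬((z + ((4 * s - 2) - x)) % (4 * s - 2) ∈ A s (i - 1)))
    from (Finset.filter_filter _ _ _).symm]
  have hKcard : ((Finset.range (4 * s - 2)).filter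
      (fun x => (x + ((4 * s - 2) - y)) % (4 * s - 2) ∈ A s i)).card = s + i := by
    rw [card_shift_filter hM0 hy (A s i) (A_lt hs hi2), A_card hs hi2]
  have hqcard : i ≤ (((Finset.range (4 * s - 2)).filter
      (fun x => (x + ((4 * s - 2) - y)) % (4 * s - 2) ∈ A s i)).filter
      (fun x => (z + ((4 * s - 2) - x)) % (4 * s - 2) ∈ A s (i - 1))).card := by
    have hwM : (z + ((4 * s - 2) - y)) % (4 * s - 2) < 4 * s - 2 := Nat.mod_lt _ hM0
    have hcore := core (w := (z + ((4 * s - 2) - y)) % (4 * s - 2)) hs hi1 hi2 hwM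
    refine le_trans hcore
      (Finset.card_le_card_of_injOn (fun a => (y + a) % (4 * s - 2)) ?_ ?_)
    · intro a ha
      simp only [Finset.mem_coe, mem_filter] at ha ⊢
      obtain ⟨haA, haPred⟩ := ha
      have haM : a < 4 * s - 2 := A_lt hs hi2 a haA
      refine ⟨⟨?_, ?_⟩, ?_⟩
      · simp only [mem_range]
        exact Nat.mod_lt _ hM0
      · rw [modH1 haM hy]
        exact haA
      · rw [modH5 haM hy hz]
        exact haPred
    · intro a ha a' ha' haa
      simp only [] at haa
      simp only [coe_filter, Set.mem_setOf_eq] at ha ha'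
      have haM : a < 4 * s - 2 := A_lt hs hi2 a ha.1
      have haM' : a' < 4 * s - 2 := A_lt hs hi2 a' ha'.1
      calc a = ((y + a) % (4 * s - 2) + ((4 * s - 2) - y)) % (4 * s - 2) :=
            (modH1 haM hy).symm
      _ = ((y + a') % (4 * s - 2) + ((4 * s - 2) - y)) % (4 * s - 2) := by rw [haa]
      _ = a' := modH1 haM' hy
  have htotal := Finset.card_filter_add_card_filter_not
    (s := (Finset.range (4 * s - 2)).filter
      (fun x => (x + ((4 * s - 2) - y)) % (4 * s - 2) ∈ A s i))
    (p := fun x => (z + ((4 * s - 2) - x)) % (4 * s - 2) ∈ A s (i - 1))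
  omega

/-- card bound for the last vertex's strategy. -/
lemma last_card {s z : ℕ} (hs : 2 ≤ s) (hz : z < 4 * s - 2) :
    ((Finset.range (2 * s - 1)).filter
      (fun x => ¬((z + ((4 * s - 2) - x)) % (4 * s - 2) ∈ A s (s - 2)))).card ≤ s := by
  have hM0 : 0 < 4 * s - 2 := by omega
  have hqcard : s - 1 ≤ ((Finset.range (2 * s - 1)).filter
      (fun x => (z + ((4 * s - 2) - x)) % (4 * s - 2) ∈ A s (s - 2))).card := by
    have hlast := lastCount (z := z) hs (by omega)
    refine le_trans hlast
      (Finset.card_le_card_of_injOn (fun b => (z + ((4 * s - 2) - b)) % (4 * s - 2)) ?_ ?_)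
    · intro b hb
      simp only [Finset.mem_coe, mem_filter] at hb ⊢
      obtain ⟨hbA, hbPred⟩ := hb
      have hbM : b < 4 * s - 2 := A_lt hs (by omega) b hbA
      refine ⟨?_, ?_⟩
      · simp only [mem_range]
        exact hbPred
      · rw [modH4 hbM hz]
        exact hbA
    · intro b hb b' hb' hbb
      simp only [] at hbb
      simp only [coe_filter, Set.mem_setOf_eq] at hb hb'
      have hbM : b < 4 * s - 2 := A_lt hs (by omega) b hb.1
      have hbM' : b' < 4 * s - 2 := A_lt hs (by omega) b' hb'.1
      calc b = (z + ((4 * s - 2) - (z + ((4 * s - 2) - b)) % (4 * s - 2))) % (4 * s - 2) :=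
            (modH4 hbM hz).symm
      _ = (z + ((4 * s - 2) - (z + ((4 * s - 2) - b')) % (4 * s - 2))) % (4 * s - 2) := by
            rw [hbb]
      _ = b' := modH4 hbM' hz
  have htotal := Finset.card_filter_add_card_filter_not
    (s := Finset.range (2 * s - 1))
    (p := fun x => (z + ((4 * s - 2) - x)) % (4 * s - 2) ∈ A s (s - 2))
  have hNcard : (Finset.range (2 * s - 1)).card = 2 * s - 1 := Finset.card_range _
  omega

/-- read a color off a natural-number index (0 outside range). -/
def cc (s : ℕ) (c : Fin s → ℕ) (j : ℕ) : ℕ := if h : j < s then c ⟨j, h⟩ else 0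

/-- The strategy. -/
def sig (s : ℕ) (v : Fin s) (c : Fin s → ℕ) : Finset ℕ :=
  if s ≤ 1 then {0}
  else if v.val = 0 then
    (Finset.range (4 * s - 2)).filter
      (fun x => (x + ((4 * s - 2) - (cc s c 1) % (4 * s - 2))) % (4 * s - 2) ∈ A s 0)
  else if v.val = s - 1 then
    (Finset.range (2 * s - 1)).filter
      (fun x => ¬(((cc s c (s - 2)) % (4 * s - 2) + ((4 * s - 2) - x)) % (4 * s - 2)
        ∈ A s (s - 2)))
  else
    (Finset.range (4 * s - 2)).filter
      (fun x => (x + ((4 * s - 2) - (cc s c (v.val + 1)) % (4 * s - 2))) % (4 * s - 2)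
          ∈ A s v.val ∧
        ¬(((cc s c (v.val - 1)) % (4 * s - 2) + ((4 * s - 2) - x)) % (4 * s - 2)
          ∈ A s (v.val - 1)))

end HatPathAux


/-- The game on the path `P_s` on `s` vertices `v₁, …, v_s` is winning, where
each `vᵢ`, `i < s`, has hatness `4s-2`, the last vertex `v_s` has hatness `2s-1`, and every
vertex makes `s` guesses. -/
theorem path_P_s_winning (s : ℕ) (hs : 1 ≤ s) :
    HatWinning (SimpleGraph.pathGraph s)
      (fun i => if (i : ℕ) = s - 1 then 2 * s - 1 else 4 * s - 2) (fun _ => s) := by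
  classical
  refine ⟨HatPathAux.sig s, ?_, ?_, ?_⟩
  · -- depends only on neighbours
    intro v c c' hcc
    have hv := v.isLt
    have key : ∀ j, j < s → (j + 1 = v.val ∨ v.val + 1 = j) →
        HatPathAux.cc s c j = HatPathAux.cc s c' j := by
      intro j hj hadj
      have hadj' : (SimpleGraph.pathGraph s).Adj v ⟨j, hj⟩ := by
        rw [SimpleGraph.pathGraph_adj]
        rcases hadj with h | h
        · exact Or.inr h
        · exact Or.inl h
      have := hcc ⟨j, hj⟩ hadj'
      simp only [HatPathAux.cc, dif_pos hj]
      exact this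
    simp only [HatPathAux.sig]
    split_ifs with h1 h2 h3
    · rfl
    · rw [key 1 (by omega) (by omega)]
    · rw [key (s - 2) (by omega) (by omega)]
    · rw [key (v.val + 1) (by omega) (by omega), key (v.val - 1) (by omega) (by omega)]
  · -- at most s guesses
    intro v c
    have hv := v.isLt
    simp only [HatPathAux.sig]
    split_ifs with h1 h2 h3
    · simpa using hs
    · rw [HatPathAux.card_shift_filter (by omega) (Nat.mod_lt _ (by omega)) _
        (HatPathAux.A_lt (by omega) (by omega)),
        HatPathAux.A_card (by omega) (by omega)]
      omega
    · exact HatPathAux.last_card (by omega) (Nat.mod_lt _ (by omega))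
    · exact HatPathAux.middle_card (by omega) (by omega) (by omega)
        (Nat.mod_lt _ (by omega)) (Nat.mod_lt _ (by omega))
  · -- winning
    intro c hc
    by_contra hno
    push_neg at hno
    by_cases h1 : s ≤ 1
    · obtain rfl : s = 1 := by omega
      have h0 : (0 : ℕ) < 1 := by omega
      have hmem := hno ⟨0, h0⟩
      have hb := hc ⟨0, h0⟩
      simp only [Fin.val_mk, show (1:ℕ) - 1 = 0 from rfl, eq_self_iff_true, if_true] at hb
      simp only [HatPathAux.sig, if_pos (show (1 : ℕ) ≤ 1 from le_rfl),
        Finset.mem_singleton] at hmem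
      omega
    · have hs2 : 2 ≤ s := by omega
      have hDlt : ∀ j (hj : j + 1 < s), HatPathAux.cc s c j < 4 * s - 2 := by
        intro j hj
        have hb := hc ⟨j, by omega⟩
        simp only [Fin.val_mk, (show ¬(j = s - 1) by omega), if_false] at hb
        simp only [HatPathAux.cc, dif_pos (show j < s by omega)]
        exact hb
      have hDlast : HatPathAux.cc s c (s - 1) < 2 * s - 1 := by
        have hb := hc ⟨s - 1, by omega⟩
        simp only [Fin.val_mk, eq_self_iff_true, if_true] at hb
        simp only [HatPathAux.cc, dif_pos (show s - 1 < s by omega)]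
        exact hb
      have hlt : ∀ j, j < s → HatPathAux.cc s c j < 4 * s - 2 := by
        intro j hj
        rcases (by omega : j = s - 1 ∨ j + 1 < s) with rfl | h
        · omega
        · exact hDlt j h
      have claims : ∀ t, t ≤ s - 2 →
          (HatPathAux.cc s c (s - 2 - t)
            + ((4 * s - 2) - HatPathAux.cc s c (s - 2 - t + 1))) % (4 * s - 2)
            ∈ HatPathAux.A s (s - 2 - t) := by
        intro t
        induction t with
        | zero =>
          intro _
          have hvm : s - 1 < s := by omega
          have hmem := hno ⟨s - 1, hvm⟩
          simp only [HatPathAux.sig, Fin.val_mk, h1, (show ¬(s - 1 = 0) by omega),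
            eq_self_iff_true, if_false, if_true,
            Finset.mem_filter, Finset.mem_range, not_and, not_not] at hmem
          have hcv : c ⟨s - 1, hvm⟩ = HatPathAux.cc s c (s - 1) := by
            simp only [HatPathAux.cc, dif_pos hvm]
          rw [hcv] at hmem
          have hkey := hmem hDlast
          rw [Nat.mod_add_mod] at hkey
          rw [Nat.sub_zero, show s - 2 + 1 = s - 1 by omega]
          exact hkey
        | succ t ih =>
          intro ht
          have hih := ih (by omega)
          have hvm : s - 2 - t < s := by omega
          have hmem := hno ⟨s - 2 - t, hvm⟩
          simp only [HatPathAux.sig, Fin.val_mk, h1, (show ¬(s - 2 - t = 0) by omega),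
            (show ¬(s - 2 - t = s - 1) by omega), if_false,
            Finset.mem_filter, Finset.mem_range, not_and, not_not] at hmem
          have hcv : c ⟨s - 2 - t, hvm⟩ = HatPathAux.cc s c (s - 2 - t) := by
            simp only [HatPathAux.cc, dif_pos hvm]
          rw [hcv] at hmem
          have hP1 : (HatPathAux.cc s c (s - 2 - t)
              + ((4 * s - 2) - HatPathAux.cc s c (s - 2 - t + 1) % (4 * s - 2)))
              % (4 * s - 2) ∈ HatPathAux.A s (s - 2 - t) := by
            rw [Nat.mod_eq_of_lt (hlt _ (by omega))]
            exact hih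
          have hkey := hmem (hlt _ (by omega)) hP1
          rw [Nat.mod_add_mod] at hkey
          rw [show s - 2 - (t + 1) = s - 2 - t - 1 by omega,
            show s - 2 - t - 1 + 1 = s - 2 - t by omega]
          exact hkey
      have hcl := claims (s - 2) le_rfl
      rw [show s - 2 - (s - 2) = 0 by omega] at hcl
      rw [zero_add] at hcl
      have h0lt : (0 : ℕ) < s := by omega
      have hmem := hno ⟨0, h0lt⟩
      simp only [HatPathAux.sig, Fin.val_mk, h1, eq_self_iff_true, if_false, if_true,
        Finset.mem_filter, Finset.mem_range, not_and] at hmem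
      have hcv : c ⟨0, h0lt⟩ = HatPathAux.cc s c 0 := by
        simp only [HatPathAux.cc, dif_pos h0lt]
      rw [hcv] at hmem
      exact hmem (hlt 0 (by omega))
        (by rw [Nat.mod_eq_of_lt (hlt 1 (by omega))]; exact hcl)

end PathHatAux
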